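/- As n → ∞ along the positive integers, (∫_0^n x^n e^{−x} dx)/n! converges to 1/2. -/

import Mathlib

open Filter MeasureTheory Real Set
open Filter MeasureTheory Real Set


lemma log_le_sub_half_sq {s : ℝ} (h1 : -1 < s) (h2 : s ≤ 0) :
    Real.log (1 + s) ≤ s - s ^ 2 / 2 := by
  set φ : ℝ → ℝ := fun s => s - s ^ 2 / 2 - Real.log (1 + s) with hφ
  have hderiv : ∀ x ∈ Set.Ioo (-1:ℝ) 0, HasDerivAt φ (1 - x - (1 + x)⁻¹) x := by
    intro x hx
    have hx1 : (0:ℝ) < 1 + x := by nlinarith [hx.1]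
    have h1 : HasDerivAt (fun s : ℝ => s - s ^ 2 / 2) (1 - x) x := by
      have := ((hasDerivAt_id x).sub (((hasDerivAt_pow 2 x).div_const 2)))
      exact this.congr_deriv (by norm_num)
    have h2 : HasDerivAt (fun s : ℝ => Real.log (1 + s)) ((1 + x)⁻¹) x := by
      have := (Real.hasDerivAt_log hx1.ne').comp x
        ((hasDerivAt_const x (1:ℝ)).add (hasDerivAt_id x))
      exact this.congr_deriv (by simp)
    exact h1.sub h2
  have key : AntitoneOn φ (Set.Ioc (-1 : ℝ) 0) := by
    apply antitoneOn_of_deriv_nonpos (convex_Ioc _ _)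
    · apply ContinuousOn.sub (by fun_prop)
      apply ContinuousOn.log (by fun_prop)
      intro x hx
      have := hx.1
      simp only [Set.mem_Ioc] at hx
      nlinarith [hx.1]
    · intro x hx
      rw [interior_Ioc] at hx
      exact (hderiv x hx).differentiableAt.differentiableWithinAt
    · intro x hx
      rw [interior_Ioc] at hx
      have hx1 : (0:ℝ) < 1 + x := by nlinarith [hx.1]
      have hd := hderiv x hx
      rw [hd.deriv]
      rw [sub_nonpos, ← sub_nonneg]
      have : (1 + x)⁻¹ - (1 - x) = x ^ 2 / (1 + x) := by
        field_simp; ring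
      rw [this]
      positivity
  have h0 : φ s ≥ φ 0 := by
    rcases eq_or_lt_of_le h2 with h | h
    · simp [h]
    · exact key (Set.mem_Ioc.2 ⟨h1, h2⟩) (Set.mem_Ioc.2 ⟨by norm_num, le_refl 0⟩) h2
  simp only [hφ] at h0
  simp only [ne_eq, OfNat.ofNat_ne_zero, not_false_eq_true, zero_pow, zero_div, sub_zero,
    add_zero, Real.log_one, sub_zero] at h0
  linarith [h0]


lemma sqrt_nat_tendsto : Tendsto (fun n : ℕ => Real.sqrt n) atTop atTop := by
  have h := (tendsto_rpow_atTop (show (0:ℝ) < 1/2 by norm_num)).comp tendsto_natCast_atTop_atTop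
  exact h.congr fun n => by simp [Function.comp, Real.sqrt_eq_rpow]

lemma exponent_tendsto (t : ℝ) :
    Tendsto (fun n : ℕ => (n : ℝ) * (Real.log (1 + t / Real.sqrt n) - t / Real.sqrt n))
      atTop (nhds (-(t ^ 2 / 2))) := by
  have hsq := sqrt_nat_tendsto
  rw [tendsto_iff_norm_sub_tendsto_zero]
  have hbound : ∀ᶠ n : ℕ in atTop,
      ‖(n : ℝ) * (Real.log (1 + t / Real.sqrt n) - t / Real.sqrt n) - (-(t ^ 2 / 2))‖
        ≤ 2 * |t| ^ 3 / Real.sqrt n := by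
    filter_upwards [hsq.eventually_ge_atTop (2 * |t| + 1), eventually_ge_atTop 1]
      with n hr hn
    set r := Real.sqrt n with hrdef
    have hr0 : (0:ℝ) < r := by positivity
    have hrsq : r ^ 2 = (n : ℝ) := Real.sq_sqrt (Nat.cast_nonneg n)
    set s := t / r with hsdef
    have hs : |s| < 1 / 2 := by
      rw [hsdef, abs_div, abs_of_pos hr0, div_lt_iff₀ hr0]
      nlinarith [abs_nonneg t]
    have hs1 : |s| < 1 := hs.trans (by norm_num)
    have key := Real.abs_log_sub_add_sum_range_le (x := -s) (by rwa [abs_neg]) 2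
    norm_num at key
    have hsum : (∑ i ∈ Finset.range 2, (-s) ^ (i + 1) / (i + 1)) = -s + s ^ 2 / 2 := by
      simp [Finset.sum_range_succ]
      ring
    rw [hsum] at key
    have hns : (n : ℝ) * s ^ 2 = t ^ 2 := by
      rw [hsdef, div_pow, hrsq]
      field_simp
    have heq : (n : ℝ) * (Real.log (1 + s) - s) - (-(t ^ 2 / 2))
        = (n : ℝ) * ((-s + s ^ 2 / 2) + Real.log (1 + s)) := by
      have : (n:ℝ) * (s ^ 2 / 2) = t ^ 2 / 2 := by
        rw [← hns]; ring
      nlinarith [this]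
    rw [Real.norm_eq_abs, heq, abs_mul, Nat.abs_cast]
    have h2 : |s| ^ 3 / (1 - |s|) ≤ 2 * |s| ^ 3 := by
      rw [div_le_iff₀ (by linarith)]
      nlinarith [abs_nonneg s, pow_nonneg (abs_nonneg s) 3]
    have h3 : (n : ℝ) * |s| ^ 3 = t ^ 2 * |t| / r := by
      rw [hsdef, abs_div, abs_of_pos hr0, div_pow, ← abs_pow]
      rw [show |t ^ 3| = t ^ 2 * |t| by rw [pow_succ, abs_mul, abs_pow, sq_abs]]
      rw [show r ^ 3 = r ^ 2 * r by ring, hrsq]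
      field_simp
    calc (n : ℝ) * |(-s + s ^ 2 / 2) + Real.log (1 + s)|
        ≤ (n : ℝ) * (|s| ^ 3 / (1 - |s|)) := by
          apply mul_le_mul_of_nonneg_left key (Nat.cast_nonneg n)
      _ ≤ (n : ℝ) * (2 * |s| ^ 3) := mul_le_mul_of_nonneg_left h2 (Nat.cast_nonneg n)
      _ = 2 * (t ^ 2 * |t| / r) := by rw [show (n:ℝ) * (2 * |s|^3) = 2 * ((n:ℝ) * |s|^3) by ring, h3]
      _ = 2 * |t| ^ 3 / Real.sqrt n := by
          rw [show |t| ^ 3 = t ^ 2 * |t| by rw [pow_succ, sq_abs]]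
          rw [hrdef]; ring
  have hzero : Tendsto (fun n : ℕ => 2 * |t| ^ 3 / Real.sqrt n) atTop (nhds 0) :=
    tendsto_const_nhds.div_atTop hsq
  exact squeeze_zero' (by filter_upwards with n using norm_nonneg _) hbound hzero


noncomputable def Fn (n : ℕ) : ℝ → ℝ := fun t =>
  Set.indicator (Set.Ioc (-Real.sqrt n) 0)
    (fun t => (1 + t / Real.sqrt n) ^ n * Real.exp (-(Real.sqrt n * t))) t

noncomputable def Fgauss : ℝ → ℝ := fun t => Real.exp (-(t ^ 2 / 2))

lemma Fn_val {n : ℕ} (hn : 1 ≤ n) {t : ℝ} (ht : t ∈ Set.Ioc (-Real.sqrt n) 0) :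
    (1 + t / Real.sqrt n) ^ n * Real.exp (-(Real.sqrt n * t))
      = Real.exp ((n : ℝ) * (Real.log (1 + t / Real.sqrt n) - t / Real.sqrt n)) := by
  have hn0 : (0:ℝ) < n := by exact_mod_cast hn
  have hr : (0:ℝ) < Real.sqrt n := Real.sqrt_pos.2 hn0
  have h1 : (0:ℝ) < 1 + t / Real.sqrt n := by
    have : -1 < t / Real.sqrt n := by
      rw [lt_div_iff₀ hr]
      have := ht.1
      nlinarith
    linarith
  have hpow : (1 + t / Real.sqrt n) ^ n = Real.exp ((n:ℝ) * Real.log (1 + t / Real.sqrt n)) := by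
    rw [← Real.exp_log h1, ← Real.exp_nat_mul, Real.exp_log h1]
  have hmul : Real.sqrt n * t = (n : ℝ) * (t / Real.sqrt n) := by
    field_simp
    linear_combination t * Real.mul_self_sqrt hn0.le
  rw [hpow, hmul, ← Real.exp_add]
  ring_nf

lemma Fn_bound (n : ℕ) (t : ℝ) : |Fn n t| ≤ Fgauss t := by
  unfold Fn Fgauss
  rcases eq_or_lt_of_le (Nat.zero_le n) with h0 | hn
  · simp [← h0, Set.Ioc_self]
    positivity
  by_cases ht : t ∈ Set.Ioc (-Real.sqrt n) 0
  · rw [Set.indicator_of_mem ht, Fn_val hn ht, abs_of_nonneg (Real.exp_pos _).le,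
      Real.exp_le_exp]
    have hn0 : (0:ℝ) < n := by exact_mod_cast hn
    have hr : (0:ℝ) < Real.sqrt n := Real.sqrt_pos.2 hn0
    set s := t / Real.sqrt n with hs
    have hs1 : -1 < s := by
      rw [hs, lt_div_iff₀ hr]; nlinarith [ht.1]
    have hs2 : s ≤ 0 := div_nonpos_iff.2 (Or.inr ⟨ht.2, hr.le⟩)
    have hlog := log_le_sub_half_sq hs1 hs2
    have hns : (n:ℝ) * s ^ 2 = t ^ 2 := by
      rw [hs, div_pow, Real.sq_sqrt hn0.le]
      field_simp
    nlinarith [hlog, hn0]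
  · rw [Set.indicator_of_notMem ht]
    simp [abs_of_nonneg]
    positivity

lemma Fn_tendsto (t : ℝ) :
    Tendsto (fun n => Fn n t) atTop (nhds (Set.indicator (Set.Iic 0) Fgauss t)) := by
  rcases lt_trichotomy t 0 with ht | ht | ht
  · -- t < 0
    rw [Set.indicator_of_mem (Set.mem_Iic.2 ht.le)]
    have hlim := (Real.continuous_exp.continuousAt (x := -(t^2/2))).tendsto.comp
      (exponent_tendsto t)
    apply hlim.congr'
    filter_upwards [sqrt_nat_tendsto.eventually_gt_atTop (-t), eventually_ge_atTop 1]
      with n hr hn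
    have ht' : t ∈ Set.Ioc (-Real.sqrt n) 0 := ⟨by linarith, ht.le⟩
    simp only [Function.comp_apply, Fn, Set.indicator_of_mem ht']
    exact (Fn_val hn ht').symm
  · -- t = 0
    subst ht
    rw [Set.indicator_of_mem (Set.mem_Iic.2 le_rfl)]
    apply tendsto_const_nhds.congr'
    filter_upwards [eventually_ge_atTop 1] with n hn
    have hr : (0:ℝ) < Real.sqrt n := Real.sqrt_pos.2 (by exact_mod_cast hn)
    have h0 : (0:ℝ) ∈ Set.Ioc (-Real.sqrt n) 0 := ⟨by linarith, le_rfl⟩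
    simp [Fn, Set.indicator_of_mem h0, Fgauss]
  · -- t > 0
    rw [Set.indicator_of_notMem (by simp [Set.mem_Iic]; exact ht)]
    apply tendsto_const_nhds.congr fun n => ?_
    rw [Fn, Set.indicator_of_notMem (by simp [Set.mem_Ioc]; intro h; linarith)]

lemma gauss_integrable : Integrable Fgauss := by
  have := integrable_exp_neg_mul_sq (show (0:ℝ) < 1/2 by norm_num)
  apply this.congr
  filter_upwards with x
  unfold Fgauss
  ring_nf

lemma Kint_tendsto :
    Tendsto (fun n : ℕ => ∫ t, Fn n t) atTop
      (nhds (Real.sqrt (2 * π) / 2)) := by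
  have h := tendsto_integral_of_dominated_convergence (μ := volume) (F := Fn)
    (f := Set.indicator (Set.Iic 0) Fgauss) Fgauss
    (fun n => by
      apply AEStronglyMeasurable.indicator ?_ measurableSet_Ioc
      exact Continuous.aestronglyMeasurable (by fun_prop))
    gauss_integrable
    (fun n => by filter_upwards with t; rw [Real.norm_eq_abs]; exact Fn_bound n t)
    (by filter_upwards with t; exact Fn_tendsto t)
  convert h using 2
  rw [integral_indicator measurableSet_Iic]
  have h1 : ∫ t in Set.Iic (0:ℝ), Fgauss t = ∫ t in Set.Ioi (0:ℝ), Fgauss t := by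
    rw [show Set.Ioi (0:ℝ) = Set.Ioi (-(0:ℝ)) by norm_num, ← integral_comp_neg_Iic]
    congr 1
    funext t
    unfold Fgauss
    ring_nf
  rw [h1]
  have h2 : ∫ t in Set.Ioi (0:ℝ), Fgauss t = Real.sqrt (π / (1/2)) / 2 := by
    rw [← integral_gaussian_Ioi (1/2)]
    congr 1
    funext t
    unfold Fgauss
    ring_nf
  rw [h2]
  congr 2
  ring
theorem integral_pow_mul_exp_div_factorial :
    Tendsto (fun n : ℕ =>
        (∫ x in (0:ℝ)..(n : ℝ), x ^ n * Real.exp (-x)) / n.factorial)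
      atTop (nhds (1 / 2)) := by
  have hsqrt2pi : Real.sqrt 2 * Real.sqrt π ≠ 0 := by positivity
  have hlim : Tendsto (fun n : ℕ => (∫ t, Fn n t) / (Real.sqrt 2 * Stirling.stirlingSeq n))
      atTop (nhds (1/2)) := by
    have h := Kint_tendsto.div
      (tendsto_const_nhds.mul Stirling.tendsto_stirlingSeq_sqrt_pi) hsqrt2pi
    convert h using 2
    · rfl
    rw [Real.sqrt_mul (by norm_num : (0:ℝ) ≤ 2) π]
    rw [eq_div_iff hsqrt2pi]
    ring
  apply hlim.congr'
  filter_upwards [eventually_ge_atTop 1] with n hn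
  have hn0 : (0:ℝ) < n := by exact_mod_cast hn
  set r := Real.sqrt n with hrdef
  have hr : (0:ℝ) < r := Real.sqrt_pos.2 hn0
  have hrr : r * r = (n:ℝ) := Real.mul_self_sqrt hn0.le
  set K := ∫ t, Fn n t with hKdef
  -- Step 1: K as interval integral
  have e0 : K = ∫ t in (-r)..(0:ℝ), (1 + t / r) ^ n * Real.exp (-(r * t)) := by
    rw [hKdef, intervalIntegral.integral_of_le (by linarith : -r ≤ (0:ℝ))]
    unfold Fn
    rw [integral_indicator measurableSet_Ioc]
  -- Step 2: substitution
  have e1 : (∫ x in (0:ℝ)..(n : ℝ), x ^ n * Real.exp (-x))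
      = r * ((n:ℝ) ^ n * Real.exp (-(n:ℝ)) * K) := by
    have hsub := intervalIntegral.integral_comp_mul_add
      (f := fun x => x ^ n * Real.exp (-x)) (a := -r) (b := 0) hr.ne' (n:ℝ)
    rw [show r * -r + (n:ℝ) = 0 by nlinarith [hrr], show r * 0 + (n:ℝ) = (n:ℝ) by ring] at hsub
    have hsub2 : (∫ x in (0:ℝ)..(n:ℝ), x ^ n * Real.exp (-x))
        = r * ∫ x in (-r)..(0:ℝ), (r * x + n) ^ n * Real.exp (-(r * x + n)) := by
      rw [hsub, smul_eq_mul, ← mul_assoc, mul_inv_cancel₀ hr.ne', one_mul]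
    rw [hsub2, e0]
    congr 1
    rw [← intervalIntegral.integral_const_mul]
    congr 1
    funext t
    have harg : r * t + (n:ℝ) = (n:ℝ) * (1 + t / r) := by
      field_simp
      linear_combination t * hrr
    rw [harg, mul_pow, show -((n:ℝ) * (1 + t / r)) = -(n:ℝ) + -(r * t + n) + (n:ℝ) by
      rw [harg]; ring]
    rw [show (-(n:ℝ) + -(r * t + (n:ℝ)) + (n:ℝ)) = -(n:ℝ) + -(r*t) by ring, Real.exp_add]
    ring
  -- Step 3: factorial via Stirling
  have hden : (0:ℝ) < Real.sqrt (2 * n) * ((n:ℝ) / Real.exp 1) ^ n := by positivity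
  have e2 : (n.factorial : ℝ) = Stirling.stirlingSeq n * (Real.sqrt (2 * n) * ((n:ℝ) / Real.exp 1) ^ n) := by
    rw [Stirling.stirlingSeq, div_mul_cancel₀ _ hden.ne']
  have hstir : (0:ℝ) < Stirling.stirlingSeq n := by
    rw [Stirling.stirlingSeq]
    positivity
  -- Step 4: algebra
  rw [e1, e2]
  have h2n : Real.sqrt (2 * n) = Real.sqrt 2 * r := by
    rw [hrdef, ← Real.sqrt_mul (by norm_num : (0:ℝ) ≤ 2)]
  rw [h2n, div_pow, Real.exp_one_pow, Real.exp_neg]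
  have hexp : Real.exp (n:ℝ) ≠ 0 := (Real.exp_pos _).ne'
  have hnn : ((n:ℝ))^n ≠ 0 := by positivity
  field_simp
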